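/- Let G be a locally compact Hausdorff r-discrete topological groupoid with non-compact unit space G⁰. Define the Alexandrov groupoid G̃ = G ∪ {∞} with unit space G⁰ ∪ {∞}, composable pairs G⁽²⁾ ∪ {(∞,∞)}, ∞·∞ = ∞, r(∞) = s(∞) = ∞, and topology generated by G̃, the open sets of the one-point compactification G⁰₊, and the open sets of G. Then G̃ is a locally compact Hausdorff r-discrete topological groupoid with compact unit space containing G as an open subgroupoid. -/

import Mathlib

/-- A topological groupoid structure on a topological space `G`.  The range and source
maps land in the set of units (idempotents of `src`), composition `mul g h` is defined
when `src g = rng h`, and all structure maps are continuous. -/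
structure TopGroupoid (G : Type*) [TopologicalSpace G] where
  src : G → G
  rng : G → G
  mul : (g h : G) → src g = rng h → G
  inv : G → G
  src_src : ∀ g, src (src g) = src g
  rng_src : ∀ g, rng (src g) = src g
  src_rng : ∀ g, src (rng g) = rng g
  rng_rng : ∀ g, rng (rng g) = rng g
  src_mul : ∀ g h hgh, src (mul g h hgh) = src h
  rng_mul : ∀ g h hgh, rng (mul g h hgh) = rng g
  mul_assoc : ∀ g h k (hgh : src g = rng h) (hhk : src h = rng k)
      (h₁ : src (mul g h hgh) = rng k) (h₂ : src g = rng (mul h k hhk)),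
      mul (mul g h hgh) k h₁ = mul g (mul h k hhk) h₂
  rng_mul_cancel : ∀ g (h : src (rng g) = rng g), mul (rng g) g h = g
  mul_src_cancel : ∀ g (h : src g = rng (src g)), mul g (src g) h = g
  src_inv : ∀ g, src (inv g) = rng g
  rng_inv : ∀ g, rng (inv g) = src g
  inv_inv : ∀ g, inv (inv g) = g
  inv_mul_cancel : ∀ g (h : src (inv g) = rng g), mul (inv g) g h = src g
  mul_inv_cancel : ∀ g (h : src g = rng (inv g)), mul g (inv g) h = rng g
  continuous_src : Continuous src
  continuous_rng : Continuous rng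
  continuous_inv : Continuous inv
  continuous_mul : Continuous fun p : {p : G × G // src p.1 = rng p.2} =>
    mul p.1.1 p.1.2 p.2

namespace TopGroupoid

variable {G : Type*} [TopologicalSpace G] (𝒢 : TopGroupoid G)

/-- The unit space `G⁰` of the groupoid. -/
def units : Set G := {x | 𝒢.src x = x}

/-- A groupoid is principal if `g ↦ (r g, s g)` is injective. -/
def Principal : Prop := Function.Injective fun g => (𝒢.rng g, 𝒢.src g)

/-- A subset of `G` closed under inversion and composition. -/
def IsSubgroupoid (S : Set G) : Prop :=
  (∀ g ∈ S, 𝒢.inv g ∈ S) ∧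
    ∀ g ∈ S, ∀ h ∈ S, ∀ hgh : 𝒢.src g = 𝒢.rng h, 𝒢.mul g h hgh ∈ S

/-- The subgroupoid generated by a subset. -/
def gen (X : Set G) : Set G := ⋂₀ {S | X ⊆ S ∧ 𝒢.IsSubgroupoid S}

/-- A groupoid is étale if its range map is a local homeomorphism. -/
def Etale : Prop :=
  ∀ g : G, ∃ U : Set G, IsOpen U ∧ g ∈ U ∧ Set.InjOn 𝒢.rng U ∧
    ∀ V ⊆ U, IsOpen V → IsOpen (𝒢.rng '' V)

/-- Dynamic asymptotic dimension at most `d` (Guentner–Willett–Yu): for every open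
precompact `V ⊆ G` there are open sets `U₀, …, U_d` in the unit space covering
`s(V) ∪ r(V)` such that each `⟨{g ∈ V : s g, r g ∈ U i}⟩` is precompact. -/
def DadLE (d : ℕ) : Prop :=
  ∀ V : Set G, IsOpen V → IsCompact (closure V) →
    ∃ U : Fin (d + 1) → Set G,
      (∀ i, IsOpen (U i) ∧ U i ⊆ 𝒢.units) ∧
      (𝒢.src '' V ∪ 𝒢.rng '' V ⊆ ⋃ i, U i) ∧
      ∀ i, IsCompact (closure (𝒢.gen {g ∈ V | 𝒢.src g ∈ U i ∧ 𝒢.rng g ∈ U i}))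

/-- Dynamic asymptotic dimension as an extended natural number. -/
noncomputable def dad : ℕ∞ :=
  sInf {m : ℕ∞ | ∃ d : ℕ, m = d ∧ 𝒢.DadLE d}

end TopGroupoid

variable {G : Type*} [TopologicalSpace G]

/-- The basis for the topology of the Alexandrov groupoid `G̃ = G ∪ {∞}`: the whole
space, the open sets of `G`, and the open sets of the one-point compactification of
the unit space. -/
def alexBasis (𝒢 : TopGroupoid G) : Set (Set (Option G)) :=
  {Set.univ} ∪ {S | ∃ U : Set G, IsOpen U ∧ S = some '' U} ∪
    {S | ∃ K : Set G, K ⊆ 𝒢.units ∧ IsCompact K ∧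
      S = insert none (some '' (𝒢.units \ K))}

/-- The topology of the Alexandrov groupoid. -/
def alexTop (𝒢 : TopGroupoid G) : TopologicalSpace (Option G) :=
  TopologicalSpace.generateFrom (alexBasis 𝒢)

namespace AlexAux

open Topology TopologicalSpace Set

variable {G : Type*} [TopologicalSpace G] (𝒢 : TopGroupoid G)

lemma unit_rng {x : G} (hx : x ∈ 𝒢.units) : 𝒢.rng x = x := by
  conv_lhs => rw [← hx]
  rw [𝒢.rng_src, hx]

lemma mul_of_eq_rng : ∀ x y (_ : x = 𝒢.rng y) (p : 𝒢.src x = 𝒢.rng y),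
    𝒢.mul x y p = y := by
  rintro x y rfl p
  exact 𝒢.rng_mul_cancel y p

lemma unit_inv {x : G} (hx : x ∈ 𝒢.units) : 𝒢.inv x = x := by
  have h1 : x = 𝒢.rng (𝒢.inv x) := by rw [𝒢.rng_inv, hx]
  have h2 := mul_of_eq_rng 𝒢 x (𝒢.inv x) h1 (by rw [hx, ← h1])
  have h3 := 𝒢.mul_inv_cancel x (by rw [hx, ← h1])
  rw [h2] at h3
  rw [h3, unit_rng 𝒢 hx]

lemma isClosed_units [T2Space G] : IsClosed 𝒢.units :=
  isClosed_eq 𝒢.continuous_src continuous_id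

/-- source map of the Alexandrov groupoid -/
def srco : Option G → Option G := Option.map 𝒢.src
def rngo : Option G → Option G := Option.map 𝒢.rng
def invo : Option G → Option G := Option.map 𝒢.inv

def mulo : (g h : Option G) → srco 𝒢 g = rngo 𝒢 h → Option G
  | some g, some h, p => some (𝒢.mul g h (Option.some.inj p))
  | none, none, _ => none
  | some _, none, p => nomatch p
  | none, some _, p => nomatch p


lemma isOpen_basic {s : Set (Option G)} (hs : s ∈ alexBasis 𝒢) : IsOpen[alexTop 𝒢] s :=
  TopologicalSpace.isOpen_generateFrom_of_mem hs

lemma isOpen_someim {U : Set G} (hU : IsOpen U) : IsOpen[alexTop 𝒢] (some '' U) :=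
  isOpen_basic 𝒢 (Or.inl (Or.inr ⟨U, hU, rfl⟩))

lemma isOpen_inftyim {K : Set G} (hK : K ⊆ 𝒢.units) (hKc : IsCompact K) :
    IsOpen[alexTop 𝒢] (insert none (some '' (𝒢.units \ K))) :=
  isOpen_basic 𝒢 (Or.inr ⟨K, hK, hKc, rfl⟩)

variable [T2Space G]

lemma continuous_some (hrd : IsOpen 𝒢.units) :
    Continuous[_, alexTop 𝒢] (some : G → Option G) := by
  letI := alexTop 𝒢
  refine continuous_generateFrom_iff.mpr ?_
  rintro s ((rfl | ⟨U, hU, rfl⟩) | ⟨K, hK, hKc, rfl⟩)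
  · simpa using isOpen_univ
  · rw [Set.preimage_image_eq U (Option.some_injective G)]; exact hU
  · have : (some : G → Option G) ⁻¹' (insert none (some '' (𝒢.units \ K))) = 𝒢.units \ K := by
      ext a; simp
    rw [this]; exact hrd.sdiff hKc.isClosed

lemma isOpenMap_some : @IsOpenMap G (Option G) _ (alexTop 𝒢) some :=
  fun U hU => isOpen_someim 𝒢 hU

lemma openEmbedding_some (hrd : IsOpen 𝒢.units) :
    @Topology.IsOpenEmbedding G (Option G) _ (alexTop 𝒢) some := by
  letI := alexTop 𝒢
  exact Topology.IsOpenEmbedding.of_continuous_injective_isOpenMap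
    (continuous_some 𝒢 hrd) (Option.some_injective G) (isOpenMap_some 𝒢)

lemma continuous_mapo (hrd : IsOpen 𝒢.units) (f : G → G) (hf : Continuous f)
    (hfix : ∀ x ∈ 𝒢.units, f x = x) :
    Continuous[alexTop 𝒢, alexTop 𝒢] (Option.map f) := by
  letI := alexTop 𝒢
  refine continuous_generateFrom_iff.mpr ?_
  rintro s ((rfl | ⟨U, hU, rfl⟩) | ⟨K, hK, hKc, rfl⟩)
  · simpa using isOpen_univ
  · have : Option.map f ⁻¹' (some '' U) = some '' (f ⁻¹' U) := by
      ext x; rcases x with _ | a <;> simp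
    rw [this]; exact isOpen_someim 𝒢 (hU.preimage hf)
  · have : Option.map f ⁻¹' (insert none (some '' (𝒢.units \ K)))
        = insert none (some '' (𝒢.units \ K)) ∪ some '' (f ⁻¹' (𝒢.units \ K)) := by
      apply Set.Subset.antisymm
      · rintro (_ | a) hx
        · exact Or.inl (Set.mem_insert _ _)
        · rcases hx with h | ⟨b, hb, hba⟩
          · exact nomatch h
          · cases Option.some.inj hba
            exact Or.inr ⟨a, hb, rfl⟩
      · rintro x (hx | ⟨a, ha, rfl⟩)
        · rcases hx with rfl | ⟨a, ha, rfl⟩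
          · exact Set.mem_insert _ _
          · refine Set.mem_insert_of_mem _ ⟨f a, ?_, rfl⟩
            rw [hfix a ha.1]; exact ha
        · exact Set.mem_insert_of_mem _ ⟨f a, ha, rfl⟩
    rw [this]
    exact (isOpen_inftyim 𝒢 hK hKc).union
      (isOpen_someim 𝒢 ((hrd.sdiff hKc.isClosed).preimage hf))

lemma continuous_mulo (hrd : IsOpen 𝒢.units) :
    @Continuous {p : Option G × Option G // srco 𝒢 p.1 = rngo 𝒢 p.2} (Option G)
      (@instTopologicalSpaceSubtype _ _ (@instTopologicalSpaceProd _ _ (alexTop 𝒢) (alexTop 𝒢)))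
      (alexTop 𝒢) (fun p => mulo 𝒢 p.1.1 p.1.2 p.2) := by
  letI := alexTop 𝒢
  have key : ∀ U : Set G, IsOpen U →
      IsOpen ((fun p : {p : Option G × Option G // srco 𝒢 p.1 = rngo 𝒢 p.2} =>
        mulo 𝒢 p.1.1 p.1.2 p.2) ⁻¹' (some '' U)) := by
    intro U hU
    have h1 : IsOpen ((fun q : {q : G × G // 𝒢.src q.1 = 𝒢.rng q.2} =>
        𝒢.mul q.1.1 q.1.2 q.2) ⁻¹' U) := hU.preimage 𝒢.continuous_mul
    obtain ⟨O, hO, hOeq⟩ := isOpen_induced_iff.mp h1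
    refine isOpen_induced_iff.mpr ⟨Prod.map some some '' O,
      ((isOpenMap_some 𝒢).prodMap (isOpenMap_some 𝒢)) O hO, ?_⟩
    ext ⟨⟨a, b⟩, p⟩
    rcases a with _ | a <;> rcases b with _ | b
    · constructor
      · rintro ⟨⟨u, v⟩, _, heq⟩
        exact nomatch heq
      · rintro ⟨c, _, hc⟩
        exact nomatch hc
    · exact nomatch p
    · exact nomatch p
    · have hp : 𝒢.src a = 𝒢.rng b := Option.some.inj p
      have hkey := Set.ext_iff.mp hOeq ⟨(a, b), hp⟩
      constructor
      · rintro ⟨⟨u, v⟩, hO', heq⟩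
        obtain ⟨h1', h2'⟩ := Prod.ext_iff.mp heq
        cases Option.some.inj h1'
        cases Option.some.inj h2'
        exact ⟨_, hkey.mp hO', rfl⟩
      · rintro ⟨c, hc, hceq⟩
        cases Option.some.inj hceq
        exact ⟨(a, b), hkey.mpr hc, rfl⟩
  refine continuous_generateFrom_iff.mpr ?_
  rintro s ((rfl | ⟨U, hU, rfl⟩) | ⟨K, hK, hKc, rfl⟩)
  · simpa using isOpen_univ
  · exact key U hU
  · set V := 𝒢.units \ K with hV
    have hVo : IsOpen V := hrd.sdiff hKc.isClosed
    set T : Set (Option G) := insert none (some '' V) with hT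
    have hTo : IsOpen T := isOpen_inftyim 𝒢 hK hKc
    have heq : (fun p : {p : Option G × Option G // srco 𝒢 p.1 = rngo 𝒢 p.2} =>
        mulo 𝒢 p.1.1 p.1.2 p.2) ⁻¹' T
        = (Subtype.val ⁻¹' (T ×ˢ T)) ∪ ((fun p : {p : Option G × Option G //
            srco 𝒢 p.1 = rngo 𝒢 p.2} => mulo 𝒢 p.1.1 p.1.2 p.2) ⁻¹' (some '' V)) := by
      ext ⟨⟨a, b⟩, p⟩
      rcases a with _ | a <;> rcases b with _ | b
      · constructor
        · intro _
          exact Or.inl ⟨Set.mem_insert _ _, Set.mem_insert _ _⟩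
        · intro _
          exact Set.mem_insert _ _
      · exact nomatch p
      · exact nomatch p
      · have hp : 𝒢.src a = 𝒢.rng b := Option.some.inj p
        constructor
        · rintro (h | ⟨c, hc, hceq⟩)
          · exact nomatch h
          · exact Or.inr ⟨c, hc, hceq⟩
        · rintro (⟨ha, hb⟩ | ⟨c, hc, hceq⟩)
          · have haV : a ∈ V := by
              rcases ha with h | ⟨c, hc, hceq⟩
              · exact nomatch h
              · cases Option.some.inj hceq; exact hc
            have hbV : b ∈ V := by
              rcases hb with h | ⟨c, hc, hceq⟩
              · exact nomatch h
              · cases Option.some.inj hceq; exact hc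
            have hab : a = 𝒢.rng b := haV.1.symm.trans hp
            have hmm : mulo 𝒢 (some a) (some b) p = some b :=
              congrArg some (mul_of_eq_rng 𝒢 a b hab _)
            show mulo 𝒢 (some a) (some b) p ∈ T
            rw [hmm]
            exact Set.mem_insert_of_mem _ ⟨b, hbV, rfl⟩
          · exact Set.mem_insert_of_mem _ ⟨c, hc, hceq⟩
    rw [heq]
    exact ((hTo.prod hTo).preimage continuous_subtype_val).union (key V hVo)


def alexGroupoid (hrd : IsOpen 𝒢.units) : @TopGroupoid (Option G) (alexTop 𝒢) :=
  letI : TopologicalSpace (Option G) := alexTop 𝒢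
  { src := srco 𝒢
    rng := rngo 𝒢
    mul := mulo 𝒢
    inv := invo 𝒢
    src_src := fun g => by cases g <;> simp [srco, 𝒢.src_src]
    rng_src := fun g => by cases g <;> simp [srco, rngo, 𝒢.rng_src]
    src_rng := fun g => by cases g <;> simp [srco, rngo, 𝒢.src_rng]
    rng_rng := fun g => by cases g <;> simp [rngo, 𝒢.rng_rng]
    src_mul := fun g h hgh => by
      rcases g with _|g <;> rcases h with _|h <;>
        first
          | rfl
          | (cases hgh; done)
          | exact congrArg some (𝒢.src_mul g h _)
    rng_mul := fun g h hgh => by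
      rcases g with _|g <;> rcases h with _|h <;>
        first
          | rfl
          | (cases hgh; done)
          | exact congrArg some (𝒢.rng_mul g h _)
    mul_assoc := fun g h k hgh hhk h₁ h₂ => by
      rcases g with _|g <;> rcases h with _|h <;> rcases k with _|k <;>
        first
          | rfl
          | (cases hgh; done)
          | (cases hhk; done)
          | exact congrArg some (𝒢.mul_assoc g h k _ _ _ _)
    rng_mul_cancel := fun g h => by
      cases g with
      | none => rfl
      | some g => exact congrArg some (𝒢.rng_mul_cancel g _)
    mul_src_cancel := fun g h => by
      cases g with
      | none => rfl
      | some g => exact congrArg some (𝒢.mul_src_cancel g _)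
    src_inv := fun g => by cases g <;> simp [srco, rngo, invo, 𝒢.src_inv]
    rng_inv := fun g => by cases g <;> simp [srco, rngo, invo, 𝒢.rng_inv]
    inv_inv := fun g => by cases g <;> simp [invo, 𝒢.inv_inv]
    inv_mul_cancel := fun g h => by
      cases g with
      | none => rfl
      | some g => exact congrArg some (𝒢.inv_mul_cancel g _)
    mul_inv_cancel := fun g h => by
      cases g with
      | none => rfl
      | some g => exact congrArg some (𝒢.mul_inv_cancel g _)
    continuous_src := continuous_mapo 𝒢 hrd 𝒢.src 𝒢.continuous_src (fun x hx => hx)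
    continuous_rng := continuous_mapo 𝒢 hrd 𝒢.rng 𝒢.continuous_rng (fun x hx => unit_rng 𝒢 hx)
    continuous_inv := continuous_mapo 𝒢 hrd 𝒢.inv 𝒢.continuous_inv (fun x hx => unit_inv 𝒢 hx)
    continuous_mul := continuous_mulo 𝒢 hrd }


lemma isBasis (hrd : IsOpen 𝒢.units) :
    @IsTopologicalBasis (Option G) (alexTop 𝒢) (alexBasis 𝒢) := by
  letI := alexTop 𝒢
  refine ⟨?_, ?_, rfl⟩
  · rintro t₁ ((rfl | ⟨U, hU, rfl⟩) | ⟨K, hK, hKc, rfl⟩) t₂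
      ((rfl | ⟨V, hV, rfl⟩) | ⟨L, hL, hLc, rfl⟩) x hx
    · exact ⟨univ, Or.inl (Or.inl rfl), trivial, by simp⟩
    · exact ⟨some '' V, Or.inl (Or.inr ⟨V, hV, rfl⟩), hx.2, fun y hy => ⟨trivial, hy⟩⟩
    · exact ⟨_, Or.inr ⟨L, hL, hLc, rfl⟩, hx.2, fun y hy => ⟨trivial, hy⟩⟩
    · exact ⟨some '' U, Or.inl (Or.inr ⟨U, hU, rfl⟩), hx.1, fun y hy => ⟨hy, trivial⟩⟩
    · refine ⟨some '' (U ∩ V), Or.inl (Or.inr ⟨_, hU.inter hV, rfl⟩), ?_, ?_⟩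
      · rw [Set.image_inter (Option.some_injective G)]; exact hx
      · rw [Set.image_inter (Option.some_injective G)]
    · refine ⟨some '' (U ∩ (𝒢.units \ L)),
        Or.inl (Or.inr ⟨_, hU.inter (hrd.sdiff hLc.isClosed), rfl⟩), ?_, ?_⟩
      · obtain ⟨hx1, hx2⟩ := hx
        obtain ⟨a, ha, rfl⟩ := hx1
        rcases hx2 with h | ⟨b, hb, hba⟩
        · exact nomatch h
        · cases Option.some.inj hba; exact ⟨a, ⟨ha, hb⟩, rfl⟩
      · rintro y ⟨a, ⟨h1, h2⟩, rfl⟩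
        exact ⟨⟨a, h1, rfl⟩, Set.mem_insert_of_mem _ ⟨a, h2, rfl⟩⟩
    · exact ⟨_, Or.inr ⟨K, hK, hKc, rfl⟩, hx.1, fun y hy => ⟨hy, trivial⟩⟩
    · refine ⟨some '' (V ∩ (𝒢.units \ K)),
        Or.inl (Or.inr ⟨_, hV.inter (hrd.sdiff hKc.isClosed), rfl⟩), ?_, ?_⟩
      · obtain ⟨hx2, hx1⟩ := hx
        obtain ⟨a, ha, rfl⟩ := hx1
        rcases hx2 with h | ⟨b, hb, hba⟩
        · exact nomatch h
        · cases Option.some.inj hba; exact ⟨a, ⟨ha, hb⟩, rfl⟩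
      · rintro y ⟨a, ⟨h1, h2⟩, rfl⟩
        exact ⟨Set.mem_insert_of_mem _ ⟨a, h2, rfl⟩, ⟨a, h1, rfl⟩⟩
    · have hiden : insert none (some '' (𝒢.units \ (K ∪ L)))
          = insert none (some '' (𝒢.units \ K)) ∩ insert none (some '' (𝒢.units \ L)) := by
        ext y; rcases y with _ | a
        · simp
        · simp only [Set.mem_insert_iff, Set.mem_inter_iff, Set.mem_image, Set.mem_diff,
            Set.mem_union, Option.some.injEq]
          constructor
          · rintro (h | ⟨b, hb, rfl⟩)
            · exact nomatch h
            · exact ⟨Or.inr ⟨b, ⟨hb.1, fun hbK => hb.2 (Or.inl hbK)⟩, rfl⟩,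
                Or.inr ⟨b, ⟨hb.1, fun hbL => hb.2 (Or.inr hbL)⟩, rfl⟩⟩
          · rintro ⟨h1 | ⟨b, hb, rfl⟩, h2⟩
            · exact nomatch h1
            · rcases h2 with h2 | ⟨c, hc, hcb⟩
              · exact nomatch h2
              · cases hcb
                exact Or.inr ⟨b, ⟨hb.1, fun h => h.elim hb.2 hc.2⟩, rfl⟩
      refine ⟨insert none (some '' (𝒢.units \ (K ∪ L))),
        Or.inr ⟨K ∪ L, Set.union_subset hK hL, hKc.union hLc, rfl⟩, ?_, ?_⟩
      · rw [hiden]; exact hx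
      · rw [hiden]
  · exact Set.sUnion_eq_univ_iff.mpr fun x => ⟨univ, Or.inl (Or.inl rfl), trivial⟩

lemma t2 [LocallyCompactSpace G] (hrd : IsOpen 𝒢.units) :
    @T2Space (Option G) (alexTop 𝒢) := by
  letI := alexTop 𝒢
  have sep : ∀ g : G, ∃ u v : Set (Option G),
      IsOpen u ∧ IsOpen v ∧ (none : Option G) ∈ u ∧ some g ∈ v ∧ Disjoint u v := by
    intro g
    by_cases hg : g ∈ 𝒢.units
    · obtain ⟨K, hKc, hgK, hKu⟩ := exists_compact_subset hrd hg
      refine ⟨insert none (some '' (𝒢.units \ K)), some '' interior K,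
        isOpen_inftyim 𝒢 hKu hKc, isOpen_someim 𝒢 isOpen_interior,
        Set.mem_insert _ _, ⟨g, hgK, rfl⟩, ?_⟩
      rw [Set.disjoint_left]
      rintro x (rfl | ⟨a, ha, rfl⟩) ⟨b, hb, hba⟩
      · exact nomatch hba
      · cases Option.some.inj hba
        exact ha.2 (interior_subset hb)
    · refine ⟨insert none (some '' (𝒢.units \ ∅)), some '' 𝒢.unitsᶜ,
        isOpen_inftyim 𝒢 (Set.empty_subset _) isCompact_empty,
        isOpen_someim 𝒢 (isClosed_units 𝒢).isOpen_compl,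
        Set.mem_insert _ _, ⟨g, hg, rfl⟩, ?_⟩
      rw [Set.disjoint_left]
      rintro x (rfl | ⟨a, ha, rfl⟩) ⟨b, hb, hba⟩
      · exact nomatch hba
      · cases Option.some.inj hba
        exact hb ha.1
  constructor
  intro x y hxy
  match x, y with
  | none, none => exact absurd rfl hxy
  | none, some g => exact sep g
  | some g, none =>
      obtain ⟨u, v, hu, hv, hnu, hgv, hd⟩ := sep g
      exact ⟨v, u, hv, hu, hgv, hnu, hd.symm⟩
  | some g, some h =>
      have hgh : g ≠ h := fun e => hxy (congrArg some e)
      obtain ⟨u, v, hu, hv, hgu, hhv, hd⟩ := t2_separation hgh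
      refine ⟨some '' u, some '' v, isOpen_someim 𝒢 hu, isOpen_someim 𝒢 hv,
        ⟨g, hgu, rfl⟩, ⟨h, hhv, rfl⟩, ?_⟩
      rw [Set.disjoint_left]
      rintro x ⟨a, ha, rfl⟩ ⟨b, hb, hba⟩
      cases Option.some.inj hba
      exact (Set.disjoint_left.mp hd ha) hb

lemma isCompact_c0 (hrd : IsOpen 𝒢.units) :
    @IsCompact (Option G) (alexTop 𝒢) (insert none (some '' 𝒢.units)) := by
  letI := alexTop 𝒢
  classical
  refine isCompact_of_finite_subcover ?_
  intro ι U hUo hcov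
  have hnone : (none : Option G) ∈ ⋃ i, U i := hcov (Set.mem_insert _ _)
  obtain ⟨i₀, hi₀⟩ := Set.mem_iUnion.mp hnone
  obtain ⟨B, hB, hnB, hBU⟩ := (isBasis 𝒢 hrd).exists_subset_of_mem_open hi₀ (hUo i₀)
  rcases hB with (rfl | ⟨V, hV, rfl⟩) | ⟨L, hL, hLc, rfl⟩
  · exact ⟨{i₀}, fun x _ => Set.mem_biUnion (Finset.mem_singleton_self i₀) (hBU trivial)⟩
  · obtain ⟨a, _, h⟩ := hnB; exact absurd h (by simp)
  · have hLco : IsCompact (some '' L : Set (Option G)) := hLc.image (continuous_some 𝒢 hrd)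
    have hsub : (some '' L : Set (Option G)) ⊆ ⋃ i, U i := by
      rintro x ⟨a, ha, rfl⟩
      exact hcov (Set.mem_insert_of_mem _ ⟨a, hL ha, rfl⟩)
    obtain ⟨t, ht⟩ := hLco.elim_finite_subcover U hUo hsub
    refine ⟨insert i₀ t, ?_⟩
    rintro x hx
    by_cases hxi : x ∈ U i₀
    · exact Set.mem_biUnion (Finset.mem_insert_self _ _) hxi
    · rcases hx with rfl | ⟨a, ha, rfl⟩
      · exact absurd (hBU hnB) hxi
      · have haL : a ∈ L := by
          by_contra haL
          exact hxi (hBU (Set.mem_insert_of_mem _ ⟨a, ⟨ha, haL⟩, rfl⟩))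
        obtain ⟨j, hjt, hxj⟩ := Set.mem_iUnion₂.mp (ht ⟨a, haL, rfl⟩)
        exact Set.mem_biUnion (Finset.mem_insert_of_mem hjt) hxj

lemma locallyCompact [LocallyCompactSpace G] (hrd : IsOpen 𝒢.units) :
    @LocallyCompactSpace (Option G) (alexTop 𝒢) := by
  letI := alexTop 𝒢
  constructor
  intro x n hn
  obtain ⟨B, hB, hxB, hBn⟩ := (isBasis 𝒢 hrd).mem_nhds_iff.mp hn
  match x with
  | some g =>
      have hex : ∃ Uo : Set G, IsOpen Uo ∧ g ∈ Uo ∧ some '' Uo ⊆ B := by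
        rcases hB with (rfl | ⟨V, hV, rfl⟩) | ⟨K, hK, hKc, rfl⟩
        · exact ⟨Set.univ, isOpen_univ, trivial, fun y _ => trivial⟩
        · obtain ⟨a, ha, hag⟩ := hxB
          cases Option.some.inj hag
          exact ⟨V, hV, ha, subset_rfl⟩
        · have hg : g ∈ 𝒢.units \ K := by
            rcases hxB with h | ⟨a, ha, hag⟩
            · exact absurd h (by simp)
            · cases Option.some.inj hag; exact ha
          exact ⟨𝒢.units \ K, hrd.sdiff hKc.isClosed, hg, Set.subset_insert _ _⟩
      obtain ⟨Uo, hUo, hgU, hUB⟩ := hex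
      obtain ⟨K, hKc, hgK, hKU⟩ := exists_compact_subset hUo hgU
      refine ⟨some '' K, ?_, (Set.image_mono hKU).trans (hUB.trans hBn),
        hKc.image (continuous_some 𝒢 hrd)⟩
      exact mem_nhds_iff.mpr ⟨some '' interior K, Set.image_mono interior_subset,
        isOpen_someim 𝒢 isOpen_interior, ⟨g, hgK, rfl⟩⟩
  | none =>
      rcases hB with (rfl | ⟨V, hV, rfl⟩) | ⟨K, hK, hKc, rfl⟩
      · refine ⟨insert none (some '' 𝒢.units), ?_, fun y _ => hBn trivial,
          isCompact_c0 𝒢 hrd⟩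
        have ho : IsOpen (insert none (some '' 𝒢.units) : Set (Option G)) := by
          simpa using isOpen_inftyim 𝒢 (Set.empty_subset _) isCompact_empty
        exact ho.mem_nhds (Set.mem_insert _ _)
      · obtain ⟨a, _, h⟩ := hxB; exact absurd h (by simp)
      · obtain ⟨L, hLc, hKL, hLu⟩ := exists_compact_between hKc hrd hK
        refine ⟨insert none (some '' 𝒢.units) \ some '' interior L, ?_, ?_,
          (isCompact_c0 𝒢 hrd).diff (isOpen_someim 𝒢 isOpen_interior)⟩
        · refine mem_nhds_iff.mpr ⟨insert none (some '' (𝒢.units \ L)), ?_,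
            isOpen_inftyim 𝒢 hLu hLc, Set.mem_insert _ _⟩
          rintro x (rfl | ⟨a, ha, rfl⟩)
          · exact ⟨Set.mem_insert _ _, by rintro ⟨b, _, h⟩; exact nomatch h⟩
          · refine ⟨Set.mem_insert_of_mem _ ⟨a, ha.1, rfl⟩, ?_⟩
            rintro ⟨b, hb, hba⟩
            cases Option.some.inj hba
            exact ha.2 (interior_subset hb)
        · refine fun x hx => hBn ?_
          obtain ⟨hx1, hx2⟩ := hx
          rcases hx1 with rfl | ⟨a, ha, rfl⟩
          · exact Set.mem_insert _ _
          · exact Set.mem_insert_of_mem _ ⟨a, ⟨ha, fun haK => hx2 ⟨a, hKL haK, rfl⟩⟩, rfl⟩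

lemma unitso (hrd : IsOpen 𝒢.units) :
    @TopGroupoid.units (Option G) (alexTop 𝒢) (alexGroupoid 𝒢 hrd)
      = insert none (some '' 𝒢.units) := by
  ext x
  rcases x with _ | a
  · simp [TopGroupoid.units, alexGroupoid, srco]
  · simp [TopGroupoid.units, alexGroupoid, srco]

end AlexAux

set_option maxHeartbeats 1000000 in
/-- the Alexandrov groupoid.  For a locally compact Hausdorff r-discrete
groupoid `G` with non-compact unit space, the stated collection is a basis for the
generated topology on `G̃ = G ∪ {∞}`, and there is a groupoid structure on `G̃`
extending that of `G` (with `∞` a new unit), making `G̃` a locally compact Hausdorff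
r-discrete groupoid with compact unit space containing `G` as an open subgroupoid. -/
theorem stmt_12 {G : Type*} [TopologicalSpace G] [T2Space G] [LocallyCompactSpace G]
    (𝒢 : TopGroupoid G) (hrd : IsOpen 𝒢.units) (hnc : ¬ IsCompact 𝒢.units)
    [inst : TopologicalSpace (Option G)] (hinst : inst = alexTop 𝒢) :
    TopologicalSpace.IsTopologicalBasis (alexBasis 𝒢) ∧
    ∃ 𝒢' : TopGroupoid (Option G),
      (∀ g : G, 𝒢'.src (some g) = some (𝒢.src g)) ∧ 𝒢'.src none = none ∧
      (∀ g : G, 𝒢'.rng (some g) = some (𝒢.rng g)) ∧ 𝒢'.rng none = none ∧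
      (∀ g : G, 𝒢'.inv (some g) = some (𝒢.inv g)) ∧ 𝒢'.inv none = none ∧
      (∀ (g h : G) (hgh : 𝒢.src g = 𝒢.rng h)
          (hgh' : 𝒢'.src (some g) = 𝒢'.rng (some h)),
        𝒢'.mul (some g) (some h) hgh' = some (𝒢.mul g h hgh)) ∧
      (∀ hinf : 𝒢'.src none = 𝒢'.rng none, 𝒢'.mul none none hinf = none) ∧
      𝒢'.units = insert none (some '' 𝒢.units) ∧
      T2Space (Option G) ∧
      LocallyCompactSpace (Option G) ∧
      IsOpen 𝒢'.units ∧
      IsCompact 𝒢'.units ∧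
      IsOpen (Set.range (some : G → Option G)) ∧
      Topology.IsEmbedding (some : G → Option G) := by
  subst hinst
  refine ⟨AlexAux.isBasis 𝒢 hrd, AlexAux.alexGroupoid 𝒢 hrd, fun g => rfl, rfl,
    fun g => rfl, rfl, fun g => rfl, rfl, fun g h hgh hgh' => rfl, fun hinf => rfl,
    AlexAux.unitso 𝒢 hrd, AlexAux.t2 𝒢 hrd, AlexAux.locallyCompact 𝒢 hrd, ?_, ?_, ?_, ?_⟩
  · rw [AlexAux.unitso 𝒢 hrd]
    simpa using AlexAux.isOpen_inftyim 𝒢 (Set.empty_subset _) isCompact_empty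
  · rw [AlexAux.unitso 𝒢 hrd]
    exact AlexAux.isCompact_c0 𝒢 hrd
  · have h := AlexAux.isOpen_someim 𝒢 (isOpen_univ (X := G))
    rw [Set.image_univ] at h
    exact h
  · exact @Topology.IsOpenEmbedding.toIsEmbedding G (Option G) _ (alexTop 𝒢) some
      (AlexAux.openEmbedding_some 𝒢 hrd)
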